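/- Let V be a finite-dimensional real inner product space, a a symmetric positive definite bilinear form on V, and A the operator with (Av, w) = a(v,w). Suppose V₁, ..., V_N are subspaces of V with inclusion maps J_i : V_i → V, and let A_i : V_i → V_i be defined by (A_i v, w) = a(v,w) for v, w ∈ V_i. Then the additive Schwarz operator M⁻¹ = Σ_i J_i A_i⁻¹ J_iᵗ is symmetric positive semidefinite with respect to (·,·), and it is positive definite if Σ_i V_i = V. -/

import Mathlib

open RealInnerProductSpace

/-- The additive Schwarz operator `M⁻¹ = Σ_i J_i A_i⁻¹ J_iᵗ` is symmetric positive
semidefinite w.r.t. the inner product, and positive definite if the subspaces span `V`. -/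
theorem stmt_1 {V : Type*} [NormedAddCommGroup V] [InnerProductSpace ℝ V]
    [FiniteDimensional ℝ V]
    (a : V →ₗ[ℝ] V →ₗ[ℝ] ℝ) (hsymm : ∀ v w, a v w = a w v)
    (hpos : ∀ v, v ≠ 0 → 0 < a v v)
    (A : V →ₗ[ℝ] V) (hA : ∀ v w, ⟪A v, w⟫ = a v w)
    (N : ℕ) (Vi : Fin N → Submodule ℝ V)
    (Jt : ∀ i, V →ₗ[ℝ] Vi i)
    (hJt : ∀ i (v : V) (w : Vi i), ⟪Jt i v, w⟫ = ⟪v, (w : V)⟫)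
    (Ainv : ∀ i, Vi i →ₗ[ℝ] Vi i)
    (hAinv : ∀ i (v w : Vi i), a ((Ainv i v : V)) ((w : V)) = ⟪v, w⟫)
    (Minv : V →ₗ[ℝ] V)
    (hM : Minv = ∑ i, (Vi i).subtype ∘ₗ (Ainv i) ∘ₗ (Jt i)) :
    (∀ v w, ⟪Minv v, w⟫ = ⟪v, Minv w⟫) ∧
    (∀ v, 0 ≤ ⟪Minv v, v⟫) ∧
    ((⨆ i, Vi i) = ⊤ → ∀ v, v ≠ 0 → 0 < ⟪Minv v, v⟫) := by
  -- a is positive semidefinite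
  have ha0 : ∀ u : V, 0 ≤ a u u := by
    intro u
    rcases eq_or_ne u 0 with h | h
    · simp [h]
    · exact (hpos u h).le
  -- ⟪Ainv x, x⟫ = a (Ainv x) (Ainv x)
  have hAA : ∀ i (x y : Vi i), (⟪Ainv i x, y⟫ : ℝ) = a (Ainv i x : V) (Ainv i y : V) := by
    intro i x y
    have h1 := hAinv i x (Ainv i y)
    have h2 := hAinv i y (Ainv i x)
    rw [hsymm] at h2
    rw [real_inner_comm, ← h2, h1]
  have hAsym : ∀ i (x y : Vi i), (⟪Ainv i x, y⟫ : ℝ) = ⟪x, Ainv i y⟫ := by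
    intro i x y
    rw [hAA i x y, hAinv i x (Ainv i y)]
  -- key expansion
  have key : ∀ v w, (⟪Minv v, w⟫ : ℝ) = ∑ i, ⟪Ainv i (Jt i v), Jt i w⟫ := by
    intro v w
    rw [hM]
    simp only [LinearMap.sum_apply, LinearMap.comp_apply, Submodule.subtype_apply]
    rw [sum_inner]
    refine Finset.sum_congr rfl fun i _ => ?_
    rw [real_inner_comm, ← hJt i w (Ainv i (Jt i v)), real_inner_comm]
  -- each term is nonneg
  have hterm : ∀ i (v : V), (0:ℝ) ≤ ⟪Ainv i (Jt i v), Jt i v⟫ := by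
    intro i v
    rw [hAA]
    exact ha0 _
  refine ⟨?_, ?_, ?_⟩
  · intro v w
    calc (⟪Minv v, w⟫ : ℝ) = ∑ i, ⟪Ainv i (Jt i v), Jt i w⟫ := key v w
      _ = ∑ i, ⟪Ainv i (Jt i w), Jt i v⟫ :=
          Finset.sum_congr rfl fun i _ => by rw [hAsym, real_inner_comm]
      _ = ⟪Minv w, v⟫ := (key w v).symm
      _ = ⟪v, Minv w⟫ := real_inner_comm _ _
  · intro v
    rw [key]
    exact Finset.sum_nonneg fun i _ => hterm i v
  · intro htop v hv
    rcases lt_or_eq_of_le ((Finset.sum_nonneg fun i _ => hterm i v).trans_eq (key v v).symm) with h | h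
    · exact h
    exfalso
    -- each term is zero
    have hz : ∀ i ∈ Finset.univ, (⟪Ainv i (Jt i v), Jt i v⟫ : ℝ) = 0 := by
      apply (Finset.sum_eq_zero_iff_of_nonneg fun i _ => hterm i v).mp
      rw [← key, ← h]
    -- hence Ainv i (Jt i v) = 0, hence Jt i v = 0
    have hJz : ∀ i, Jt i v = 0 := by
      intro i
      have hz' := hz i (Finset.mem_univ i)
      rw [hAA] at hz'
      have hA0 : (Ainv i (Jt i v) : V) = 0 := by
        by_contra hne
        exact absurd hz' (ne_of_gt (hpos _ hne))
      have : ∀ w : Vi i, (⟪Jt i v, w⟫ : ℝ) = 0 := by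
        intro w
        rw [← hAinv i (Jt i v) w, hA0]
        simp
      exact inner_self_eq_zero.mp (this (Jt i v))
    -- v is orthogonal to every Vi, hence to ⊤
    have hvperp : ∀ i (w : Vi i), (⟪v, (w : V)⟫ : ℝ) = 0 := by
      intro i w
      rw [← hJt i v w, hJz i]
      simp
    have : v ∈ (⨆ i, Vi i)ᗮ := by
      rw [Submodule.mem_orthogonal]
      intro u hu
      refine Submodule.iSup_induction (motive := fun u => (⟪u, v⟫ : ℝ) = 0) Vi hu
        (fun i x hx => ?_) (by simp) (fun x y hx hy => by show (⟪x + y, v⟫:ℝ) = 0; rw [inner_add_left, hx, hy, add_zero])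
      show (⟪x, v⟫ : ℝ) = 0
      rw [real_inner_comm]
      exact hvperp i ⟨x, hx⟩
    rw [htop, Submodule.top_orthogonal_eq_bot] at this
    exact hv (Submodule.mem_bot ℝ |>.mp this)
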